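/- For every α > 0, the function C ↦ h_unb^α(C) is continuous on the set of non-degenerate normalized class adjacency matrices, i.e., on the set of m×m real matrices that are symmetric, have nonnegative entries, whose entries sum to 1, and which have at least two nonzero entries (continuity). -/
import Mathlib


/-- A normalized class adjacency matrix: symmetric, nonnegative entries, entries sum to 1. -/
def IsNCAM {m : ℕ} (C : Matrix (Fin m) (Fin m) ℝ) : Prop :=
  (∀ i j, C i j = C j i) ∧ (∀ i j, 0 ≤ C i j) ∧ (∑ i : Fin m, ∑ j : Fin m, C i j = 1)

/-- Non-degenerate: at least two nonzero entries. -/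
def Nondeg {m : ℕ} (C : Matrix (Fin m) (Fin m) ℝ) : Prop :=
  ∃ p q : Fin m × Fin m, p ≠ q ∧ C p.1 p.2 ≠ 0 ∧ C q.1 q.2 ≠ 0

/-- Unbiased homophily (α = 0). -/
noncomputable def hUnb {m : ℕ} (C : Matrix (Fin m) (Fin m) ℝ) : ℝ :=
  (∑ i : Fin m, ∑ j : Fin m, if i < j then Real.sqrt (C i i * C j j) - C i j else 0) /
  (∑ i : Fin m, ∑ j : Fin m, if i < j then Real.sqrt (C i i * C j j) + C i j else 0)

/-- Unbiased homophily with parameter α. -/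
noncomputable def hUnbAlpha {m : ℕ} (α : ℝ) (C : Matrix (Fin m) (Fin m) ℝ) : ℝ :=
  hUnb C + α * min (∑ i : Fin m, Real.sqrt (C i i)) 1
/-- continuity of h_unb^α on the set of non-degenerate
normalized class adjacency matrices. -/
theorem continuity {m : ℕ} (α : ℝ) (hα : 0 < α) :
    ContinuousOn (hUnbAlpha α)
      {C : Matrix (Fin m) (Fin m) ℝ | IsNCAM C ∧ Nondeg C} := by
  have hentry : ∀ i j : Fin m, Continuous fun C : Matrix (Fin m) (Fin m) ℝ => C i j :=
    fun i j => (continuous_apply j).comp (continuous_apply i)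
  have hnum : Continuous fun C : Matrix (Fin m) (Fin m) ℝ =>
      ∑ i : Fin m, ∑ j : Fin m, if i < j then Real.sqrt (C i i * C j j) - C i j else 0 := by
    refine continuous_finset_sum _ fun i _ => continuous_finset_sum _ fun j _ => ?_
    by_cases h : i < j
    · simp only [if_pos h]
      exact (Real.continuous_sqrt.comp ((hentry i i).mul (hentry j j))).sub (hentry i j)
    · simp only [if_neg h]; exact continuous_const
  have hden : Continuous fun C : Matrix (Fin m) (Fin m) ℝ =>
      ∑ i : Fin m, ∑ j : Fin m, if i < j then Real.sqrt (C i i * C j j) + C i j else 0 := by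
    refine continuous_finset_sum _ fun i _ => continuous_finset_sum _ fun j _ => ?_
    by_cases h : i < j
    · simp only [if_pos h]
      exact (Real.continuous_sqrt.comp ((hentry i i).mul (hentry j j))).add (hentry i j)
    · simp only [if_neg h]; exact continuous_const
  have hmin : Continuous fun C : Matrix (Fin m) (Fin m) ℝ =>
      α * min (∑ i : Fin m, Real.sqrt (C i i)) 1 :=
    continuous_const.mul ((continuous_finset_sum _ fun i _ =>
      Real.continuous_sqrt.comp (hentry i i)).min continuous_const)
  have hdne : ∀ C ∈ {C : Matrix (Fin m) (Fin m) ℝ | IsNCAM C ∧ Nondeg C},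
      (∑ i : Fin m, ∑ j : Fin m, if i < j then Real.sqrt (C i i * C j j) + C i j else 0) ≠ 0 := by
    rintro C ⟨⟨hsymm, hnn, -⟩, ⟨p, q, hpq, hp, hq⟩⟩ hzero
    -- every term is nonneg
    have hterm : ∀ i j : Fin m,
        0 ≤ (if i < j then Real.sqrt (C i i * C j j) + C i j else 0) := by
      intro i j
      split
      · exact add_nonneg (Real.sqrt_nonneg _) (hnn i j)
      · exact le_refl 0
    have hall : ∀ i j : Fin m, i < j → Real.sqrt (C i i * C j j) + C i j = 0 := by
      intro i j hij
      have h1 := (Finset.sum_eq_zero_iff_of_nonneg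
        (fun i _ => Finset.sum_nonneg fun j _ => hterm i j)).mp hzero i (Finset.mem_univ i)
      have h2 := (Finset.sum_eq_zero_iff_of_nonneg (fun j _ => hterm i j)).mp h1 j
        (Finset.mem_univ j)
      simpa [hij] using h2
    have hoff : ∀ i j : Fin m, i ≠ j → C i j = 0 := by
      intro i j hij
      rcases lt_or_gt_of_ne hij with h | h
      · have := hall i j h
        have hs : (0:ℝ) ≤ Real.sqrt (C i i * C j j) := Real.sqrt_nonneg _
        linarith [hnn i j]
      · have := hall j i h
        have := hsymm i j
        have hs : (0:ℝ) ≤ Real.sqrt (C j j * C i i) := Real.sqrt_nonneg _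
        linarith [hnn j i]
    have hdiag : ∀ i j : Fin m, i < j → C i i * C j j = 0 := by
      intro i j hij
      have h := hall i j hij
      have hc : C i j = 0 := hoff i j (ne_of_lt hij)
      have hs : Real.sqrt (C i i * C j j) = 0 := by linarith
      exact le_antisymm (Real.sqrt_eq_zero'.mp hs) (mul_nonneg (hnn i i) (hnn j j))
    -- p and q are on the diagonal
    have hp1 : p.1 = p.2 := by
      by_contra h; exact hp (hoff p.1 p.2 h)
    have hq1 : q.1 = q.2 := by
      by_contra h; exact hq (hoff q.1 q.2 h)
    have hne : p.1 ≠ q.1 := by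
      intro h; apply hpq; exact Prod.ext h (hp1 ▸ hq1 ▸ h)
    rcases lt_or_gt_of_ne hne with h | h
    · have := hdiag p.1 q.1 h
      rcases mul_eq_zero.mp this with h' | h'
      · exact hp (hp1 ▸ h')
      · exact hq (hq1 ▸ h')
    · have := hdiag q.1 p.1 h
      rcases mul_eq_zero.mp this with h' | h'
      · exact hq (hq1 ▸ h')
      · exact hp (hp1 ▸ h')
  have : ContinuousOn (fun C : Matrix (Fin m) (Fin m) ℝ =>
      (∑ i : Fin m, ∑ j : Fin m, if i < j then Real.sqrt (C i i * C j j) - C i j else 0) /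
      (∑ i : Fin m, ∑ j : Fin m, if i < j then Real.sqrt (C i i * C j j) + C i j else 0)
      + α * min (∑ i : Fin m, Real.sqrt (C i i)) 1)
      {C : Matrix (Fin m) (Fin m) ℝ | IsNCAM C ∧ Nondeg C} :=
    (hnum.continuousOn.div hden.continuousOn hdne).add hmin.continuousOn
  exact this
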